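/- Let U ∈ L_n be a planar tree with n leaves each internal vertex of valency ≥ 2, built by grafting corollas avoiding the last leaf, with weights in a monoid G, and evaluate it on inputs a₁,...,a_n in a unital A∞-algebra A (assigning m_{val(v),ν(v)} to each internal vertex). If j of the inputs equal the strict unit e_A and the total weight is β, then U^A_β(a₁,...,a_n) = 0 unless either the number of binary (valency-2) vertices is at least j, or j = n, β = 0 and U is a binary tree with n−1 binary vertices. -/

import Mathlib

/-- Planar rooted trees with a weight in `G` at every internal vertex. -/
inductive WTree (G : Type*) : Type _
  | leaf : WTree G
  | node : G → List (WTree G) → WTree G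

namespace WTree

variable {G : Type*}

mutual
  /-- Number of leaves. -/
  def nleaves : WTree G → ℕ
    | .leaf => 1
    | .node _ ts => nleavesL ts
  def nleavesL : List (WTree G) → ℕ
    | [] => 0
    | t :: ts => nleaves t + nleavesL ts
end

mutual
  /-- Number of binary (valency-2) internal vertices. -/
  def bcount : WTree G → ℕ
    | .leaf => 0
    | .node _ ts => (if ts.length = 2 then 1 else 0) + bcountL ts
  def bcountL : List (WTree G) → ℕ
    | [] => 0
    | t :: ts => bcount t + bcountL ts
end

mutual
  /-- Total weight (sum of all vertex weights). -/
  def totalW [AddCommMonoid G] : WTree G → G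
    | .leaf => 0
    | .node w ts => w + totalWL ts
  def totalWL [AddCommMonoid G] : List (WTree G) → G
    | [] => 0
    | t :: ts => totalW t + totalWL ts
end

mutual
  /-- The tree is binary: every internal vertex has exactly two incoming edges. -/
  def allBinary : WTree G → Bool
    | .leaf => true
    | .node _ ts => decide (ts.length = 2) && allBinaryL ts
  def allBinaryL : List (WTree G) → Bool
    | [] => true
    | t :: ts => allBinary t && allBinaryL ts
end

/-- The last element of a list of trees is a leaf. -/
def lastLeaf : List (WTree G) → Bool
  | [] => false
  | [.leaf] => true
  | [_] => false
  | _ :: ts => lastLeaf ts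

/-- The first element of a list of trees is a leaf. -/
def headLeaf : List (WTree G) → Bool
  | .leaf :: _ => true
  | _ => false

mutual
  /-- Membership in `L_n`: trees obtained by grafting corollas (of valency `≥ 2`)
  together while never grafting at the last leaf. -/
  def isL : WTree G → Bool
    | .leaf => false
    | .node _ ts => decide (2 ≤ ts.length) && childL ts && lastLeaf ts
  def childL : List (WTree G) → Bool
    | [] => true
    | .leaf :: ts => childL ts
    | .node w cs :: ts => isL (.node w cs) && childL ts
end

mutual
  /-- Membership in `R_n`: trees obtained by grafting corollas (of valency `≥ 2`)
  together while never grafting at the first leaf. -/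
  def isR : WTree G → Bool
    | .leaf => false
    | .node _ ts => decide (2 ≤ ts.length) && childR ts && headLeaf ts
  def childR : List (WTree G) → Bool
    | [] => true
    | .leaf :: ts => childR ts
    | .node w cs :: ts => isR (.node w cs) && childR ts
end

section Eval

variable {A : Type*} [AddCommGroup A] (m : G → ∀ k : ℕ, (Fin k → A) → A)

mutual
  /-- Evaluation of a weighted tree as a flow chart, assigning `m_{val(v), ν(v)}` to
  each internal vertex, the inputs being fed to the leaves in planar order. -/
  noncomputable def evalW : WTree G → List A → A
    | .leaf, vs => vs.headD 0
    | .node w ts, vs => m w ts.length (fun j => (evalWL ts vs).getD j.val 0)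
  noncomputable def evalWL : List (WTree G) → List A → List A
    | [], _ => []
    | t :: ts, vs => evalW t (vs.take (nleaves t)) :: evalWL ts (vs.drop (nleaves t))
end

end Eval

end WTree

section Aux

set_option linter.unusedSectionVars false

variable {G : Type*} [AddCommMonoid G] {A : Type*} [AddCommGroup A]

lemma evalWL_length (m : G → ∀ k : ℕ, (Fin k → A) → A) (ts : List (WTree G)) (vs : List A) :
    (WTree.evalWL m ts vs).length = ts.length := by
  induction ts generalizing vs with
  | nil => rfl
  | cons t ts ih => rw [WTree.evalWL]; simp [ih]

variable [DecidableEq A] (e : A) (m : G → ∀ k : ℕ, (Fin k → A) → A)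

/-- The strengthened statement for a single tree. -/
def TS (t : WTree G) : Prop :=
  ∀ vs : List A, vs.length = t.nleaves → WTree.evalW m t vs ≠ 0 →
    vs.count e ≤ t.bcount ∨
      (vs.count e = vs.length ∧ t.totalW = 0 ∧ t.allBinary = true ∧
        t.bcount + 1 = t.nleaves ∧ WTree.evalW m t vs = e)

lemma listStep (ts : List (WTree G)) (hts : ∀ t ∈ ts, TS e m t)
    (vs : List A) (hlen : vs.length = WTree.nleavesL ts)
    (hnz : ∀ y ∈ WTree.evalWL m ts vs, y ≠ 0) :
    vs.count e ≤ WTree.bcountL ts ∨ ∃ y ∈ WTree.evalWL m ts vs, y = e := by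
  induction ts generalizing vs with
  | nil =>
    left
    have : vs = [] := List.eq_nil_of_length_eq_zero (by simpa [WTree.nleavesL] using hlen)
    simp [this]
  | cons t ts ih =>
    rw [WTree.nleavesL] at hlen
    have h1 : (vs.take t.nleaves).length = t.nleaves := by
      rw [List.length_take]; omega
    have h2 : (vs.drop t.nleaves).length = WTree.nleavesL ts := by
      rw [List.length_drop]; omega
    have hy1 : WTree.evalW m t (vs.take t.nleaves) ≠ 0 :=
      hnz _ (by rw [WTree.evalWL]; exact List.mem_cons_self)
    have hcount : vs.count e = (vs.take t.nleaves).count e + (vs.drop t.nleaves).count e := by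
      conv_lhs => rw [← List.take_append_drop t.nleaves vs]
      rw [List.count_append]
    rcases hts t List.mem_cons_self _ h1 hy1 with h | h
    · rcases ih (fun t' ht' => hts t' (List.mem_cons_of_mem _ ht')) _ h2
        (fun y hy => hnz y (by rw [WTree.evalWL]; exact List.mem_cons_of_mem _ hy)) with h' | h'
      · left; rw [WTree.bcountL]; omega
      · right
        obtain ⟨y, hy, hye⟩ := h'
        exact ⟨y, by rw [WTree.evalWL]; exact List.mem_cons_of_mem _ hy, hye⟩
    · right
      exact ⟨_, by rw [WTree.evalWL]; exact List.mem_cons_self, h.2.2.2.2⟩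

lemma mainLemma
    (hz : ∀ (β : G) (k : ℕ) (x : Fin k → A) (i : Fin k), x i = 0 → m β k x = 0)
    (hunit_l : ∀ a : A, m 0 2 ![e, a] = a)
    (hunit_k : ∀ (β : G) (k : ℕ) (x : Fin k → A) (i : Fin k),
      ¬(k = 2 ∧ β = 0) → x i = e → m β k x = 0)
    (U : WTree G) : TS e m U := by
  refine WTree.rec (motive_1 := fun t => TS e m t)
    (motive_2 := fun ts => ∀ t ∈ ts, TS e m t) ?_ ?_ ?_ ?_ U
  · -- leaf
    intro vs hlen hne
    rw [WTree.nleaves] at hlen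
    obtain ⟨a, rfl⟩ : ∃ a, vs = [a] := by
      match vs, hlen with | [a], _ => exact ⟨a, rfl⟩
    rw [WTree.evalW] at hne ⊢
    by_cases ha : a = e
    · subst ha
      right
      refine ⟨by simp, rfl, rfl, by rw [WTree.bcount, WTree.nleaves], rfl⟩
    · left
      simp [WTree.bcount, List.count_cons, ha]
  · -- node
    intro w ts ih vs hlen hne
    rw [WTree.evalW] at hne
    have hlys : (WTree.evalWL m ts vs).length = ts.length := evalWL_length m ts vs
    have hnz : ∀ y ∈ WTree.evalWL m ts vs, y ≠ 0 := by
      intro y hy hy0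
      obtain ⟨i, hi, rfl⟩ := List.getElem_of_mem hy
      apply hne
      apply hz w ts.length _ ⟨i, by omega⟩
      show (WTree.evalWL m ts vs).getD i 0 = 0
      rw [List.getD_eq_getElem _ _ (show i < (WTree.evalWL m ts vs).length by omega)]
      exact hy0
    rw [WTree.nleaves] at hlen
    rcases listStep e m ts ih vs hlen hnz with h | h
    · left; rw [WTree.bcount]; omega
    · obtain ⟨y, hy, hye⟩ := h
      obtain ⟨i, hi, rfl⟩ := List.getElem_of_mem hy
      have hk2 : ts.length = 2 ∧ w = 0 := by
        by_contra hcon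
        refine hne (hunit_k w ts.length _ ⟨i, by omega⟩ hcon ?_)
        show (WTree.evalWL m ts vs).getD i 0 = e
        rw [List.getD_eq_getElem _ _ (show i < (WTree.evalWL m ts vs).length by omega)]
        exact hye
      obtain ⟨hk2, rfl⟩ := hk2
      clear hy hye hi
      obtain ⟨t1, t2, rfl⟩ : ∃ t1 t2, ts = [t1, t2] := by
        match ts, hk2 with | [t1, t2], _ => exact ⟨t1, t2, rfl⟩
      rw [WTree.nleavesL, WTree.nleavesL, WTree.nleavesL] at hlen
      have h1 : (vs.take t1.nleaves).length = t1.nleaves := by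
        rw [List.length_take]; omega
      have h2 : (vs.drop t1.nleaves).length = t2.nleaves := by
        rw [List.length_drop]; omega
      have htake2 : (vs.drop t1.nleaves).take t2.nleaves = vs.drop t1.nleaves := by
        apply List.take_of_length_le; omega
      have hys : WTree.evalWL m [t1, t2] vs =
          [WTree.evalW m t1 (vs.take t1.nleaves), WTree.evalW m t2 (vs.drop t1.nleaves)] := by
        rw [WTree.evalWL, WTree.evalWL, WTree.evalWL, htake2]
      set y1 := WTree.evalW m t1 (vs.take t1.nleaves) with hy1def
      set y2 := WTree.evalW m t2 (vs.drop t1.nleaves) with hy2def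
      have hfun : (fun j : Fin ([t1, t2] : List (WTree G)).length =>
          (WTree.evalWL m [t1, t2] vs).getD j.val 0) = ![y1, y2] := by
        rw [hys]; funext j; fin_cases j <;> rfl
      rw [hfun] at hne
      have hny1 : y1 ≠ 0 := hnz _ (by rw [hys]; simp)
      have hny2 : y2 ≠ 0 := hnz _ (by rw [hys]; simp)
      have hcount : vs.count e = (vs.take t1.nleaves).count e + (vs.drop t1.nleaves).count e := by
        conv_lhs => rw [← List.take_append_drop t1.nleaves vs]
        rw [List.count_append]
      have ih1 := ih t1 (by simp) _ h1 hny1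
      have ih2 := ih t2 (by simp) _ h2 hny2
      rw [← hy1def] at ih1
      rw [← hy2def] at ih2
      have hbc : (WTree.node (0 : G) [t1, t2]).bcount = 1 + (t1.bcount + (t2.bcount + 0)) := by
        rw [WTree.bcount, WTree.bcountL, WTree.bcountL, WTree.bcountL, if_pos hk2]
      rcases ih1 with ha1 | ⟨hc1, hw1, hb1, hn1, he1⟩
      · rcases ih2 with ha2 | ⟨hc2, hw2, hb2, hn2, he2⟩
        · left; rw [hbc]; omega
        · left; rw [hbc]; omega
      · rcases ih2 with ha2 | ⟨hc2, hw2, hb2, hn2, he2⟩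
        · left; rw [hbc]; omega
        · right
          have heval : WTree.evalW m (WTree.node (0 : G) [t1, t2]) vs = e := by
            rw [WTree.evalW, hfun, he1, he2]
            exact hunit_l e
          refine ⟨by omega, ?_, ?_, ?_, heval⟩
          · rw [WTree.totalW, WTree.totalWL, WTree.totalWL, WTree.totalWL, hw1, hw2]
            simp
          · rw [WTree.allBinary, WTree.allBinaryL, WTree.allBinaryL, WTree.allBinaryL,
              hb1, hb2]
            simp
          · rw [hbc, WTree.nleaves, WTree.nleavesL, WTree.nleavesL, WTree.nleavesL]
            omega
  · -- nil
    intro t ht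
    exact absurd ht List.not_mem_nil
  · -- cons
    intro t ts iht ihts t' ht'
    rcases List.mem_cons.mp ht' with h | h
    · exact h ▸ iht
    · exact ihts t' h

end Aux

/-- Let `U ∈ L_n` (or `R_n`) be a planar tree with `n` leaves, internal vertices of
valency `≥ 2` and weights in a monoid `G`, evaluated on inputs `a₁, …, a_n` in a unital
A∞-algebra `A`.  If `j` of the inputs equal the strict unit `e_A` and the total weight
is `β`, then `U^A_β(a₁, …, a_n) = 0` unless either the number of binary vertices is at
least `j`, or `j = n`, `β = 0` and `U` is a binary tree with `n − 1` binary
vertices. -/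
theorem stmt17 {A : Type*} [AddCommGroup A] [DecidableEq A]
    {G : Type*} [AddCommMonoid G]
    (e : A) (g : A → ℤ) (m : G → ∀ k : ℕ, (Fin k → A) → A)
    -- the operations are multilinear (additive in each slot)
    (hm_add : ∀ (β : G) (k : ℕ) (x : Fin k → A) (i : Fin k) (a b : A),
      m β k (Function.update x i (a + b)) =
        m β k (Function.update x i a) + m β k (Function.update x i b))
    -- `e` is a strict unit: `m_{2,0}(e,a) = (-1)^{|a|} m_{2,0}(a,e) = a` and
    -- `m_{k,β}(…, e, …) = 0` for `(k, β) ≠ (2, 0)`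
    (hunit_l : ∀ a : A, m 0 2 ![e, a] = a)
    (hunit_r : ∀ a : A, m 0 2 ![a, e] = (Int.negOnePow (g a) : ℤ) • a)
    (hunit_k : ∀ (β : G) (k : ℕ) (x : Fin k → A) (i : Fin k),
      ¬(k = 2 ∧ β = 0) → x i = e → m β k x = 0)
    (U : WTree G) (hU : U.isL = true ∨ U.isR = true)
    (vs : List A) (hlen : vs.length = U.nleaves)
    (hne : WTree.evalW m U vs ≠ 0) :
    vs.count e ≤ U.bcount ∨
      (vs.count e = vs.length ∧ U.totalW = 0 ∧ U.allBinary = true ∧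
        U.bcount = U.nleaves - 1) := by
  have hz : ∀ (β : G) (k : ℕ) (x : Fin k → A) (i : Fin k), x i = 0 → m β k x = 0 := by
    intro β k x i hxi
    have h := hm_add β k x i 0 0
    rw [add_zero] at h
    have hx : Function.update x i 0 = x := by rw [← hxi, Function.update_eq_self]
    rw [hx] at h
    exact left_eq_add.mp h
  rcases mainLemma e m hz hunit_l hunit_k U vs hlen hne with h | ⟨h1, h2, h3, h4, _⟩
  · exact Or.inl h
  · exact Or.inr ⟨h1, h2, h3, by omega⟩
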